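/- Let q be a prime power and let N be a GF(q)-representable simple rank-4 matroid isomorphic to the affine geometry AG(3,q), represented by a GF(q)-matrix D₁ with an added element g represented over an extension field F by the column α' − ω·α, where α, α' are nonzero non-parallel GF(q)-columns and ω ∈ F \ GF(q). Then there is at most one line L of N such that g lies in the closure of L in the extended matroid; consequently there exists an element e of N with cl({e, g}) = {e, g}. -/

import Mathlib

open Set Matroid

namespace Paper

variable {α : Type*}

/-- The deletion `M \ D`. -/
def del (M : Matroid α) (D : Set α) : Matroid α := M ↾ (M.E \ D)

/-- The contraction `M / C`. -/
def contr (M : Matroid α) (C : Set α) : Matroid α := (M✶ ↾ (M.E \ C))✶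

/-- `N` is a minor of `M`. -/
def IsMinorOf (N M : Matroid α) : Prop := ∃ C D : Set α, N = del (contr M C) D

/-- Rank of a set: the maximum size of an independent subset. -/
noncomputable def rk (M : Matroid α) (X : Set α) : ℕ :=
  sSup {n | ∃ I, M.Indep I ∧ I ⊆ X ∧ I.ncard = n}

/-- The rank of a matroid. -/
noncomputable def rank (M : Matroid α) : ℕ := rk M M.E

/-- The connectivity function `λ_M(X) = r(X) + r(E \ X) - r(M)`. -/
noncomputable def conn (M : Matroid α) (X : Set α) : ℤ :=
  (rk M X : ℤ) + (rk M (M.E \ X) : ℤ) - (rank M : ℤ)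

/-- Local connectivity `⊓_M(S,T) = r(S) + r(T) - r(S ∪ T)`. -/
noncomputable def localConn (M : Matroid α) (S T : Set α) : ℤ :=
  (rk M S : ℤ) + (rk M T : ℤ) - (rk M (S ∪ T) : ℤ)

/-- `κ_M(S,T) = min { λ_M(A) : S ⊆ A ⊆ E \ T }`. -/
noncomputable def kappa (M : Matroid α) (S T : Set α) : ℤ :=
  sInf {k : ℤ | ∃ A, S ⊆ A ∧ A ⊆ M.E \ T ∧ conn M A = k}

/-- Two sets are skew if their local connectivity is zero. -/
def SkewSets (M : Matroid α) (S T : Set α) : Prop := localConn M S T = 0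

/-- A circuit is a minimal dependent set. -/
def Circuit (M : Matroid α) (C : Set α) : Prop := M.Dep C ∧ ∀ C' ⊂ C, ¬ M.Dep C'

/-- A cocircuit is a circuit of the dual. -/
def Cocircuit (M : Matroid α) (C : Set α) : Prop := Circuit M✶ C

/-- A matroid is connected if any two elements lie in a common circuit. -/
def Connected (M : Matroid α) : Prop :=
  M.E.Nonempty ∧ ∀ e ∈ M.E, ∀ f ∈ M.E, e = f ∨ ∃ C, Circuit M C ∧ e ∈ C ∧ f ∈ C

/-- `M` is 3-connected: connected with no 2-separation. -/
def ThreeConnected (M : Matroid α) : Prop :=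
  Connected M ∧ ∀ X ⊆ M.E, 2 ≤ X.ncard → 2 ≤ (M.E \ X).ncard → 2 ≤ conn M X

/-- A matroid is simple if every set of at most two elements is independent. -/
def Simple (M : Matroid α) : Prop := ∀ X ⊆ M.E, X.ncard ≤ 2 → M.Indep X

/-- `φ` is an `F`-representation of `M`: independence equals linear independence. -/
def IsRepBy (M : Matroid α) (F : Type*) [Field F] {W : Type*} [AddCommGroup W]
    [Module F W] (φ : α → W) : Prop :=
  ∀ I ⊆ M.E, (M.Indep I ↔ LinearIndependent F (fun e : I => φ e.1))

/-- `M` is representable over the field `F`. -/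
def Representable (M : Matroid α) (F : Type*) [Field F] : Prop :=
  ∃ (n : ℕ) (φ : α → (Fin n → F)), IsRepBy M F φ

/-- `M` is (isomorphic to) the uniform matroid `U_{r,k}`. -/
def IsUniform (M : Matroid α) (r k : ℕ) : Prop :=
  M.E.Finite ∧ M.E.ncard = k ∧ ∀ I ⊆ M.E, (M.Indep I ↔ I.ncard ≤ r)

/-- `M` has a `U_{r,k}`-minor. -/
def HasUniformMinor (M : Matroid α) (r k : ℕ) : Prop :=
  ∃ N, IsMinorOf N M ∧ IsUniform N r k

/-- `M` is isomorphic to the projective geometry `PG(n-1, |F|)`: it has an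
`F`-representation by pairwise non-parallel nonzero vectors of `F^n` meeting
every one-dimensional subspace. -/
def IsProjGeom (M : Matroid α) (n : ℕ) (F : Type*) [Field F] : Prop :=
  ∃ φ : α → (Fin n → F),
    IsRepBy M F φ ∧ (∀ e ∈ M.E, φ e ≠ 0) ∧
    (∀ e ∈ M.E, ∀ f ∈ M.E, e ≠ f → ∀ c : F, φ f ≠ c • φ e) ∧
    (∀ v : Fin n → F, v ≠ 0 → ∃ e ∈ M.E, ∃ c : F, v = c • φ e)

/-- `M` has a `PG(n-1, |F|)`-minor. -/
def HasProjGeomMinor (M : Matroid α) (n : ℕ) (F : Type*) [Field F] : Prop :=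
  ∃ N, IsMinorOf N M ∧ IsProjGeom N n F

/-- `M ≅ AG(n, |F|)` (rank `n+1`): `M` is represented by the vectors of `F^(n+1)` with first
coordinate `1`, bijectively. -/
def IsAffineGeom (M : Matroid α) (n : ℕ) (F : Type*) [Field F] : Prop :=
  ∃ φ : α → (Fin (n + 1) → F),
    IsRepBy M F φ ∧ (∀ e ∈ M.E, φ e 0 = 1) ∧ Set.InjOn φ M.E ∧
    ∀ v : Fin (n + 1) → F, v 0 = 1 → ∃ e ∈ M.E, φ e = v

section StmtSeventeenHelpers

open Submodule Module

set_option synthInstance.maxHeartbeats 1000000 in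
/-- Coerced rows of a `K`-independent family are `F`-independent. -/
lemma lift_li {F : Type*} [Field F] {K : Subfield F} {v : Fin 4 → Fin 4 → K}
    (h : LinearIndependent K v) : LinearIndependent F (fun i j => (v i j : F)) := by
  have hA : IsUnit (Matrix.of v) := Matrix.linearIndependent_rows_iff_isUnit.1 h
  have hdet : (K.subtype.mapMatrix (Matrix.of v)).det ≠ 0 := by
    rw [← RingHom.map_det]
    exact fun h0 => (Matrix.isUnit_iff_isUnit_det _ |>.1 hA).ne_zero
      ((map_eq_zero_iff _ (Subtype.val_injective)).mp h0)
  have : IsUnit (K.subtype.mapMatrix (Matrix.of v)) :=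
    (Matrix.isUnit_iff_isUnit_det _).2 (isUnit_iff_ne_zero.2 hdet)
  exact Matrix.linearIndependent_rows_iff_isUnit.2 this

set_option synthInstance.maxHeartbeats 1000000 in
lemma descend_li {F : Type*} [Field F] {K : Subfield F} {m : ℕ} {v : Fin m → Fin 4 → K}
    (h : LinearIndependent F (fun i j => (v i j : F))) : LinearIndependent K v := by
  rw [Fintype.linearIndependent_iff] at h ⊢
  intro g hg i
  have hg' : ∑ i, ((g i : F)) • (fun j => (v i j : F)) = 0 := by
    funext j
    have := congrFun hg j
    simp only [Finset.sum_apply, Pi.smul_apply, smul_eq_mul, Pi.zero_apply] at this ⊢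
    exact_mod_cast congrArg (Subtype.val) this
  exact Subtype.ext (h _ hg' i)

set_option synthInstance.maxHeartbeats 1000000 in
lemma exists_K_coords {F : Type*} [Field F] {K : Subfield F}
    (v : Fin 4 → Fin 4 → K) (hv : LinearIndependent K v)
    (x : Fin 4 → F) (hx : ∀ j, x j ∈ K) :
    ∃ β : Fin 4 → K, x = ∑ i, (β i : F) • (fun j => (v i j : F)) := by
  have hcard : Fintype.card (Fin 4) = finrank K (Fin 4 → K) := by
    simp [Module.finrank_fin_fun]
  let B := basisOfLinearIndependentOfCardEqFinrank hv hcard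
  have hB : ⇑B = v := coe_basisOfLinearIndependentOfCardEqFinrank hv hcard
  set xb : Fin 4 → K := fun j => ⟨x j, hx j⟩ with hxb
  refine ⟨B.repr xb, ?_⟩
  have hsum : xb = ∑ i, (B.repr xb i) • v i := by
    conv_lhs => rw [← B.sum_repr xb]
    simp [hB]
  funext j
  have h2 := congrFun hsum j
  simp only [Finset.sum_apply, Pi.smul_apply, smul_eq_mul] at h2 ⊢
  have h3 : (xb j : F) = ((∑ i, B.repr xb i * v i j : K) : F) := by
    exact_mod_cast congrArg Subtype.val h2
  simpa [hxb] using h3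

lemma coords_unique {F : Type*} [Field F] {w : Fin 4 → Fin 4 → F}
    (hw : LinearIndependent F w) {c d : Fin 4 → F}
    (h : ∑ i, c i • w i = ∑ i, d i • w i) : c = d := by
  rw [Fintype.linearIndependent_iff] at hw
  funext i
  have h0 : ∑ i, (c i - d i) • w i = 0 := by
    simp [sub_smul, Finset.sum_sub_distrib, h]
  exact sub_eq_zero.mp (hw _ h0 i)

lemma omega_zero {F : Type*} [Field F] {K : Subfield F} {α α' : K} {ω : F} (hω : ω ∉ K)
    (h : (α' : F) - ω * α = 0) : α = 0 ∧ α' = 0 := by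
  rcases eq_or_ne α 0 with h0 | h0
  · refine ⟨h0, ?_⟩
    have : (α' : F) = 0 := by rw [h0] at h; simpa using h
    exact_mod_cast this
  · exfalso
    apply hω
    have hα : (α : F) ≠ 0 := by exact_mod_cast h0
    have : ω = (α' : F) / (α : F) := by
      field_simp
      linear_combination -h
    rw [this]
    exact_mod_cast ((α' / α : K)).2

set_option synthInstance.maxHeartbeats 1000000 in
set_option maxHeartbeats 1000000 in
lemma span_core {F : Type*} [Field F] {K : Subfield F} {a a' u₁ u₂ : Fin 4 → F}
    (ha : ∀ j, a j ∈ K) (ha' : ∀ j, a' j ∈ K)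
    (hu₁ : ∀ j, u₁ j ∈ K) (hu₂ : ∀ j, u₂ j ∈ K)
    (hu : LinearIndependent F ![u₁, u₂]) {ω : F} (hω : ω ∉ K)
    (hmem : a' - ω • a ∈ span F {u₁, u₂}) :
    a ∈ span F {u₁, u₂} ∧ a' ∈ span F {u₁, u₂} := by
  set c₁ : Fin 4 → K := fun j => ⟨u₁ j, hu₁ j⟩ with hc₁
  set c₂ : Fin 4 → K := fun j => ⟨u₂ j, hu₂ j⟩ with hc₂
  have hcoe : (fun i j => ((![c₁, c₂] : Fin 2 → Fin 4 → K) i j : F)) = ![u₁, u₂] := by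
    funext i j; fin_cases i <;> rfl
  have hKli : LinearIndependent K ![c₁, c₂] := descend_li (by rw [hcoe]; exact hu)
  obtain ⟨b₁, hb₁⟩ := exists_linearIndependent_cons_of_lt_finrank hKli
    (by simp [Module.finrank_fin_fun])
  obtain ⟨b₂, hb₂⟩ := exists_linearIndependent_cons_of_lt_finrank hb₁
    (by simp [Module.finrank_fin_fun])
  have hveq : (Fin.cons b₂ (Fin.cons b₁ ![c₁, c₂]) : Fin 4 → Fin 4 → K)
      = ![b₂, b₁, c₁, c₂] := by
    funext i j; fin_cases i <;> rfl
  rw [hveq] at hb₂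
  set w : Fin 4 → Fin 4 → F := fun i j => ((![b₂, b₁, c₁, c₂] : Fin 4 → Fin 4 → K) i j : F)
    with hwdef
  have hwli : LinearIndependent F w := lift_li hb₂
  have hw2 : w 2 = u₁ := by funext j; rfl
  have hw3 : w 3 = u₂ := by funext j; rfl
  obtain ⟨α, hα0⟩ := exists_K_coords _ hb₂ a ha
  obtain ⟨α', hα0'⟩ := exists_K_coords _ hb₂ a' ha'
  have hα : a = ∑ i, (α i : F) • w i := hα0
  have hα' : a' = ∑ i, (α' i : F) • w i := hα0'
  obtain ⟨s, t, hst⟩ := Submodule.mem_span_pair.1 hmem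
  have hsum : ∑ i, ((α' i : F) - ω * (α i : F)) • w i
      = ∑ i, ((![0, 0, s, t] : Fin 4 → F) i) • w i := by
    have : ∑ i, ((α' i : F) - ω * (α i : F)) • w i = a' - ω • a := by
      rw [hα, hα']
      rw [Finset.smul_sum, ← Finset.sum_sub_distrib]
      congr 1; funext i; rw [sub_smul, smul_smul]
    rw [this, ← hst]
    simp [Fin.sum_univ_four, hw2, hw3]
  have heq := coords_unique hwli hsum
  have h0 := congrFun heq 0
  have h1 := congrFun heq 1
  simp only [Matrix.cons_val_zero, Matrix.cons_val_one, Matrix.head_cons] at h0 h1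
  obtain ⟨hz0, hz0'⟩ := omega_zero hω h0
  obtain ⟨hz1, hz1'⟩ := omega_zero hω h1
  constructor
  · rw [hα]
    apply Submodule.mem_span_pair.2
    refine ⟨(α 2 : F), (α 3 : F), ?_⟩
    simp [Fin.sum_univ_four, hz0, hz1, hw2, hw3]
  · rw [hα']
    apply Submodule.mem_span_pair.2
    refine ⟨(α' 2 : F), (α' 3 : F), ?_⟩
    simp [Fin.sum_univ_four, hz0', hz1', hw2, hw3]

set_option synthInstance.maxHeartbeats 1000000 in
set_option maxHeartbeats 1000000 in
lemma point_core {F : Type*} [Field F] {K : Subfield F} {a a' u x : Fin 4 → F}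
    (ha : ∀ j, a j ∈ K) (ha' : ∀ j, a' j ∈ K)
    (hu : ∀ j, u j ∈ K) (hx : ∀ j, x j ∈ K)
    (haa' : LinearIndependent F ![a, a']) (huspan : u ∉ span F {a, a'})
    {ω : F} (hω : ω ∉ K) {c d : F}
    (hxcd : x = c • u + d • (a' - ω • a)) : x = c • u := by
  have htri : LinearIndependent F ![u, a, a'] := by
    rw [show (![u, a, a'] : Fin 3 → Fin 4 → F) = Fin.cons u ![a, a'] from rfl,
      linearIndependent_fin_cons]
    refine ⟨haa', ?_⟩
    simpa [Matrix.range_cons, Matrix.range_empty, Set.pair_comm a' a] using huspan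
  set ub : Fin 4 → K := fun j => ⟨u j, hu j⟩
  set ab : Fin 4 → K := fun j => ⟨a j, ha j⟩
  set ab' : Fin 4 → K := fun j => ⟨a' j, ha' j⟩
  have hcoe : (fun i j => ((![ub, ab, ab'] : Fin 3 → Fin 4 → K) i j : F)) = ![u, a, a'] := by
    funext i j; fin_cases i <;> rfl
  have hKli : LinearIndependent K ![ub, ab, ab'] := descend_li (by rw [hcoe]; exact htri)
  obtain ⟨b, hb⟩ := exists_linearIndependent_cons_of_lt_finrank hKli
    (by simp [Module.finrank_fin_fun])
  have hveq : (Fin.cons b ![ub, ab, ab'] : Fin 4 → Fin 4 → K) = ![b, ub, ab, ab'] := by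
    funext i j; fin_cases i <;> rfl
  rw [hveq] at hb
  set w : Fin 4 → Fin 4 → F := fun i j => ((![b, ub, ab, ab'] : Fin 4 → Fin 4 → K) i j : F)
    with hwdef
  have hwli : LinearIndependent F w := lift_li hb
  have hw1 : w 1 = u := by funext j; rfl
  have hw2 : w 2 = a := by funext j; rfl
  have hw3 : w 3 = a' := by funext j; rfl
  obtain ⟨β, hβ0⟩ := exists_K_coords _ hb x hx
  have hβ : x = ∑ i, (β i : F) • w i := hβ0
  have hsum : ∑ i, ((fun i => (β i : F)) i) • w i
      = ∑ i, ((![0, c, -(d * ω), d] : Fin 4 → F) i) • w i := by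
    rw [← hβ, hxcd]
    simp only [Fin.sum_univ_four, hw1, hw2, hw3]
    simp only [Matrix.cons_val_zero, Matrix.cons_val_one, Matrix.head_cons,
      Matrix.cons_val_two, Matrix.cons_val_three, Matrix.tail_cons]
    rw [smul_sub, smul_smul]
    module
  have heq := coords_unique hwli hsum
  have h2 := congrFun heq 2
  have h3 := congrFun heq 3
  simp only [Matrix.cons_val_two, Matrix.cons_val_three, Matrix.tail_cons,
    Matrix.head_cons, Matrix.cons_val_zero, Matrix.cons_val_one] at h2 h3
  have hd : d = 0 := by
    by_contra hd0
    have hb3 : (β 3 : F) ≠ 0 := by rw [h3]; exact hd0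
    apply hω
    have hω2 : ω = -(β 2 : F) / (β 3 : F) := by
      rw [eq_div_iff hb3]
      linear_combination h2 + ω * h3
    have hωeq : ω = ((-(β 2) / (β 3) : K) : F) := by
      rw [hω2]; push_cast; ring
    rw [hωeq]
    exact SetLike.coe_mem _
  rw [hxcd, hd]
  simp

lemma depspan {α : Type*} {F : Type*} [Field F] {M : Matroid α} {φ : α → Fin 4 → F}
    (hrep : IsRepBy M F φ) {I : Set α} {x : α} (hI : M.Indep I) (hxE : x ∈ M.E)
    (hx : ¬ M.Indep (insert x I)) : φ x ∈ span F (φ '' I) := by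
  have hIE : I ⊆ M.E := hI.subset_ground
  have hIli : LinearIndependent F (fun e : I => φ e.1) := (hrep I hIE).1 hI
  have hxI : x ∉ I := fun hxI => hx (by rwa [Set.insert_eq_of_mem hxI])
  by_contra hxspan
  exact hx ((hrep _ (Set.insert_subset hxE hIE)).2
    ((linearIndepOn_insert hxI).2 ⟨hIli, hxspan⟩))

lemma span_basis {α : Type*} {F : Type*} [Field F] {M : Matroid α} {φ : α → Fin 4 → F}
    (hrep : IsRepBy M F φ) {I X : Set α} (hB : M.IsBasis I X) (hX : X ⊆ M.E) :
    span F (φ '' X) = span F (φ '' I) := by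
  apply le_antisymm
  · rw [span_le]
    rintro - ⟨x, hxX, rfl⟩
    by_cases hxI : x ∈ I
    · exact subset_span (mem_image_of_mem φ hxI)
    · exact depspan hrep hB.indep (hX hxX)
        (fun h => hxI (hB.mem_of_insert_indep hxX h))
  · exact span_mono (Set.image_mono hB.subset)

lemma mem_cl_iff {α : Type*} {F : Type*} [Field F] {M : Matroid α} {φ : α → Fin 4 → F}
    (hrep : IsRepBy M F φ) {X : Set α} {x : α} (hX : X ⊆ M.E) (hxE : x ∈ M.E) :
    x ∈ M.closure X ↔ φ x ∈ span F (φ '' X) := by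
  obtain ⟨I, hI⟩ := M.exists_isBasis X hX
  rw [← hI.closure_eq_closure, hI.indep.mem_closure_iff', span_basis hrep hI hX]
  constructor
  · rintro ⟨-, himp⟩
    by_cases h : M.Indep (insert x I)
    · exact subset_span (mem_image_of_mem φ (himp h))
    · exact depspan hrep hI.indep hxE h
  · intro hφ
    refine ⟨hxE, fun hins => ?_⟩
    by_contra hxI
    exact ((linearIndepOn_insert hxI).1 ((hrep _ hins.subset_ground).1 hins)).2 hφ

lemma injOn_of_indep {α : Type*} {F : Type*} [Field F] {M : Matroid α} {φ : α → Fin 4 → F}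
    (hrep : IsRepBy M F φ) {I : Set α} (hI : M.Indep I) : Set.InjOn φ I := by
  have hIli := (hrep I hI.subset_ground).1 hI
  intro y hy z hz h
  exact congrArg Subtype.val (hIli.injective (a₁ := ⟨y, hy⟩) (a₂ := ⟨z, hz⟩) h)

lemma finrank_span_indep {α : Type*} {F : Type*} [Field F] {M : Matroid α} {φ : α → Fin 4 → F}
    (hrep : IsRepBy M F φ) {I : Set α} (hI : M.Indep I) (hfin : I.Finite) :
    finrank F (span F (φ '' I)) = I.ncard := by
  have hinj : Set.InjOn φ I := injOn_of_indep hrep hI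
  haveI := hfin.fintype
  haveI := (hfin.image φ).fintype
  have hIset : LinearIndependent F (fun x : (φ '' I) => (x : Fin 4 → F)) :=
    (linearIndepOn_iff_image hinj).1 ((hrep I hI.subset_ground).1 hI)
  rw [finrank_span_set_eq_card hIset, ← Set.ncard_eq_toFinset_card',
    Set.ncard_image_of_injOn hinj]

lemma rk_eq_finrank {α : Type*} {F : Type*} [Field F] {M : Matroid α} {φ : α → Fin 4 → F}
    (hrep : IsRepBy M F φ) {R L : Set α} (hR : R ⊆ M.E) (hL : L ⊆ R)
    (hfin : L.Finite) : rk (M ↾ R) L = finrank F (span F (φ '' L)) := by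
  obtain ⟨I, hI⟩ := (M ↾ R).exists_isBasis L (by simpa using hL)
  have hIM : M.IsBasis I L := ((Matroid.isBasis_restrict_iff hR).1 hI).1
  have hIfin : I.Finite := hfin.subset hI.subset
  have hspan : span F (φ '' L) = span F (φ '' I) := span_basis hrep hIM (hL.trans hR)
  have hfr : finrank F (span F (φ '' L)) = I.ncard := by
    rw [hspan, finrank_span_indep hrep hIM.indep hIfin]
  have hub : ∀ n ∈ {n | ∃ J, (M ↾ R).Indep J ∧ J ⊆ L ∧ J.ncard = n},
      n ≤ finrank F (span F (φ '' L)) := by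
    rintro n ⟨J, hJ, hJL, rfl⟩
    have hJM : M.Indep J := (Matroid.restrict_indep_iff.1 hJ).1
    have hJfin : J.Finite := hfin.subset hJL
    haveI := hJfin.fintype
    have hJli : LinearIndependent F (fun e : J => φ e.1) :=
      (hrep J hJM.subset_ground).1 hJM
    have hmem : ∀ e : J, φ e.1 ∈ span F (φ '' L) :=
      fun e => subset_span (mem_image_of_mem φ (hJL e.2))
    have hJli' : LinearIndependent F (fun e : J =>
        (⟨φ e.1, hmem e⟩ : span F (φ '' L))) := by
      apply LinearIndependent.of_comp (span F (φ '' L)).subtype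
      exact hJli
    have := hJli'.fintype_card_le_finrank
    rwa [Set.ncard_eq_toFinset_card', Set.toFinset_card]
  rw [rk]
  apply le_antisymm
  · exact csSup_le ⟨0, ∅, (M ↾ R).empty_indep, Set.empty_subset _, Set.ncard_empty α⟩
      (fun n hn => hfr ▸ (hfr ▸ hub n hn))
  · rw [hfr]
    exact le_csSup ⟨finrank F (span F (φ '' L)), hub⟩ ⟨I, hI.indep, hI.subset, rfl⟩

lemma li_range_iff {α : Type*} {n : ℕ} {R V : Type*} [DivisionRing R] [AddCommGroup V]
    [Module R V] (e : Fin n → α) (hinj : Function.Injective e) (ψ : α → V) :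
    LinearIndependent R (fun z : (Set.range e) => ψ z.1) ↔
      LinearIndependent R (fun i => ψ (e i)) := by
  rw [← linearIndependent_equiv (Equiv.ofInjective e hinj)
    (f := fun z : (Set.range e) => ψ z.1)]
  rfl

lemma li_pair_iff {α : Type*} {R V : Type*} [DivisionRing R] [AddCommGroup V] [Module R V]
    {x y : α} (hxy : x ≠ y) (ψ : α → V) :
    LinearIndependent R (fun z : ({x, y} : Set α) => ψ z.1) ↔
      LinearIndependent R ![ψ x, ψ y] := by
  have hinj : Function.Injective ![x, y] := by
    intro i j hij
    fin_cases i <;> fin_cases j <;> simp_all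
  have hrange : ({x, y} : Set α) = Set.range ![x, y] := by
    simp [Matrix.range_cons, Matrix.range_empty, Set.pair_comm]
  rw [hrange]
  rw [li_range_iff _ hinj]
  constructor <;> intro h <;>
    · have : (fun i => ψ (![x, y] i)) = ![ψ x, ψ y] := by
        funext i; fin_cases i <;> rfl
      first
        | rwa [this] at h
        | rwa [this]

end StmtSeventeenHelpers


set_option synthInstance.maxHeartbeats 1000000 in
set_option maxHeartbeats 1000000 in
/-- Extending a `GF(q)`-representation of `AG(3,q)` by the column `α' - ω·α`
(with `α,α'` nonzero non-parallel `GF(q)`-columns and `ω ∉ GF(q)`): the new element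
`g` lies in the closure of at most one line, so some element `e` satisfies
`cl({e,g}) = {e,g}`. -/
theorem stmt17 {α : Type*} (q : ℕ) {F : Type*} [Field F] (K : Subfield F)
    [Fintype K] (hq : Fintype.card K = q)
    (M : Matroid α) (g : α) (hg : g ∈ M.E)
    (φ : α → (Fin 4 → F)) (hrep : IsRepBy M F φ)
    (hKentries : ∀ e ∈ M.E \ {g}, ∀ j, φ e j ∈ K)
    (hAG : IsAffineGeom (del M {g}) 3 K)
    (a a' : Fin 4 → F) (ha : ∀ j, a j ∈ K) (ha' : ∀ j, a' j ∈ K)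
    (h0 : a ≠ 0) (h0' : a' ≠ 0) (hpar : ∀ c : F, a' ≠ c • a)
    (ω : F) (hω : ω ∉ K) (hφg : φ g = a' - ω • a) :
    (∀ L₁ L₂ : Set α, (del M {g}).IsFlat L₁ → rk (del M {g}) L₁ = 2 →
      (del M {g}).IsFlat L₂ → rk (del M {g}) L₂ = 2 →
      g ∈ M.closure L₁ → g ∈ M.closure L₂ → L₁ = L₂) ∧
    ∃ e ∈ M.E \ {g}, M.closure {e, g} = {e, g} := by
  classical
  obtain ⟨ψ, hψrep, hψ1, hψinj, hψsurj⟩ := hAG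
  have hdel : del M {g} = M ↾ (M.E \ {g}) := rfl
  have hNE : (del M {g}).E = M.E \ {g} := rfl
  have hEfin : (M.E \ {g}).Finite :=
    Set.Finite.of_finite_image (Set.toFinite _) hψinj
  have haa' : LinearIndependent F ![a, a'] :=
    (LinearIndependent.pair_iff' h0).2 (fun c h => hpar c h.symm)
  have hrange_aa' : Set.range ![a, a'] = ({a, a'} : Set (Fin 4 → F)) := by
    simp only [Matrix.range_cons, Matrix.range_empty, Set.union_empty, Set.union_singleton]
    exact Set.pair_comm a' a
  have hfr2 : Module.finrank F (Submodule.span F ({a, a'} : Set (Fin 4 → F))) = 2 := by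
    have h := linearIndependent_iff_card_eq_finrank_span.1 haa'
    rw [hrange_aa'] at h
    simpa [Set.finrank] using h.symm
  have key : ∀ L : Set α, (del M {g}).IsFlat L → rk (del M {g}) L = 2 → g ∈ M.closure L →
      L = {x | x ∈ M.E \ {g} ∧ φ x ∈ Submodule.span F ({a, a'} : Set (Fin 4 → F))} := by
    intro L hFlat hrk hgcl
    have hLE : L ⊆ M.E \ {g} := hFlat.subset_ground
    have hLM : L ⊆ M.E := hLE.trans diff_subset
    have hLfin : L.Finite := hEfin.subset hLE
    have hfr : Module.finrank F (Submodule.span F (φ '' L)) = 2 := by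
      rw [← rk_eq_finrank hrep diff_subset hLE hLfin]
      exact hdel ▸ hrk
    obtain ⟨I, hI⟩ := (del M {g}).exists_isBasis L (by rw [hNE]; exact hLE)
    have hI' : (M ↾ (M.E \ {g})).IsBasis I L := hdel ▸ hI
    have hIM : M.IsBasis I L := ((Matroid.isBasis_restrict_iff diff_subset).1 hI').1
    have hspanIL : Submodule.span F (φ '' L) = Submodule.span F (φ '' I) :=
      span_basis hrep hIM hLM
    have hIfin : I.Finite := hLfin.subset hI.subset
    have hIcard : I.ncard = 2 := by
      rw [← finrank_span_indep hrep hIM.indep hIfin, ← hspanIL, hfr]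
    obtain ⟨x, y, hxy, hIxy⟩ := Set.ncard_eq_two.1 hIcard
    have hxL : x ∈ L := hI.subset (by rw [hIxy]; exact Set.mem_insert _ _)
    have hyL : y ∈ L := hI.subset (by rw [hIxy]; exact Set.mem_insert_of_mem _ rfl)
    have hxK : ∀ j, φ x j ∈ K := hKentries x (hLE hxL)
    have hyK : ∀ j, φ y j ∈ K := hKentries y (hLE hyL)
    have hpairli : LinearIndependent F ![φ x, φ y] := by
      have hli := (hrep I hIM.indep.subset_ground).1 hIM.indep
      rw [hIxy] at hli
      exact (li_pair_iff hxy φ).1 hli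
    have hspan2 : Submodule.span F (φ '' I) = Submodule.span F {φ x, φ y} := by
      rw [hIxy, Set.image_pair]
    have hgs : φ g ∈ Submodule.span F (φ '' L) := (mem_cl_iff hrep hLM hg).1 hgcl
    rw [hφg, hspanIL, hspan2] at hgs
    obtain ⟨haspan, ha'span⟩ := span_core ha ha' hxK hyK hpairli hω hgs
    have hle : Submodule.span F ({a, a'} : Set (Fin 4 → F))
        ≤ Submodule.span F {φ x, φ y} := by
      rw [Submodule.span_le]
      intro z hz
      rcases Set.mem_insert_iff.1 hz with rfl | hz'
      · exact haspan
      · rw [Set.mem_singleton_iff] at hz'; subst hz'; exact ha'span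
    have hfrxy : Module.finrank F (Submodule.span F ({φ x, φ y} : Set (Fin 4 → F))) = 2 := by
      rw [← hspan2, ← hspanIL, hfr]
    have hEq : Submodule.span F ({a, a'} : Set (Fin 4 → F)) = Submodule.span F {φ x, φ y} :=
      Submodule.eq_of_le_of_finrank_le hle (by rw [hfrxy, hfr2])
    ext z
    simp only [Set.mem_setOf_eq]
    constructor
    · intro hzL
      refine ⟨hLE hzL, ?_⟩
      rw [hEq, ← hspan2, ← hspanIL]
      exact Submodule.subset_span (Set.mem_image_of_mem φ hzL)
    · rintro ⟨hzE, hzspan⟩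
      have hzsp : φ z ∈ Submodule.span F (φ '' I) := by
        rw [hspan2, ← hEq]; exact hzspan
      have hzN : z ∈ (del M {g}).closure I := by
        rw [hI.indep.mem_closure_iff']
        refine ⟨by rw [hNE]; exact hzE, fun hins => ?_⟩
        by_contra hzI
        have hinsM : M.Indep (insert z I) := (Matroid.restrict_indep_iff.1 (hdel ▸ hins)).1
        exact ((linearIndepOn_insert hzI).1
          ((hrep _ hinsM.subset_ground).1 hinsM)).2 hzsp
      rwa [hI.closure_eq_closure, hFlat.closure] at hzN
  refine ⟨fun L₁ L₂ h1 h2 h3 h4 h5 h6 => by rw [key L₁ h1 h2 h5, key L₂ h3 h4 h6], ?_⟩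
  set v : Fin 4 → Fin 4 → K := ![![1,0,0,0],![1,1,0,0],![1,0,1,0],![1,0,0,1]] with hv
  have hvli : LinearIndependent K v := by
    rw [Fintype.linearIndependent_iff]
    intro gc hsum i
    have h0 := congrFun hsum 0
    have h1 := congrFun hsum 1
    have h2 := congrFun hsum 2
    have h3 := congrFun hsum 3
    simp [hv, Fin.sum_univ_four] at h0 h1 h2 h3
    fin_cases i <;> simp_all
  have hv1 : ∀ i, (v i) 0 = 1 := by intro i; fin_cases i <;> rfl
  choose e he hev using fun i => hψsurj (v i) (hv1 i)
  have heinj : Function.Injective e := by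
    intro i j hij
    apply hvli.injective
    rw [← hev i, ← hev j, hij]
  have hrsub : Set.range e ⊆ M.E \ {g} := by rintro - ⟨i, rfl⟩; exact he i
  have hNind : (del M {g}).Indep (Set.range e) := by
    apply (hψrep _ (by rw [hNE]; exact hrsub)).2
    apply (li_range_iff e heinj ψ).2
    have hcomp : (fun i => ψ (e i)) = v := by funext i; rw [hev]
    rw [hcomp]; exact hvli
  have hMind : M.Indep (Set.range e) := (Matroid.restrict_indep_iff.1 (hdel ▸ hNind)).1
  have hex : ∃ i, φ (e i) ∉ Submodule.span F ({a, a'} : Set (Fin 4 → F)) := by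
    by_contra hall
    push_neg at hall
    have hφli : LinearIndependent F (fun i => φ (e i)) :=
      (li_range_iff e heinj φ).1 ((hrep _ hMind.subset_ground).1 hMind)
    have hli' : LinearIndependent F (fun i : Fin 4 =>
        (⟨φ (e i), hall i⟩ : Submodule.span F ({a, a'} : Set (Fin 4 → F)))) := by
      apply LinearIndependent.of_comp (Submodule.span F _).subtype
      exact hφli
    have hcard := hli'.fintype_card_le_finrank
    rw [hfr2] at hcard
    simp at hcard
  obtain ⟨i, hi⟩ := hex
  refine ⟨e i, he i, ?_⟩
  have he0 : e i ∈ M.E \ {g} := he i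
  have hsub2 : ({e i, g} : Set α) ⊆ M.E := by
    rw [Set.insert_subset_iff]
    exact ⟨he0.1, Set.singleton_subset_iff.2 hg⟩
  apply subset_antisymm
  · intro z hz
    have hzE : z ∈ M.E := M.closure_subset_ground _ hz
    have hzspan : φ z ∈ Submodule.span F (φ '' {e i, g}) := (mem_cl_iff hrep hsub2 hzE).1 hz
    rw [Set.image_pair] at hzspan
    obtain ⟨c, d, hcd⟩ := Submodule.mem_span_pair.1 hzspan
    by_cases hzg : z = g
    · rw [hzg]; exact Set.mem_insert_of_mem _ rfl
    have hzK := hKentries z ⟨hzE, hzg⟩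
    have heK := hKentries (e i) he0
    have hxz : φ z = c • φ (e i) := by
      apply point_core ha ha' heK hzK haa' hi hω
      rw [← hcd, hφg]
    have hzmem : z ∈ (del M {g}).E := by rw [hNE]; exact ⟨hzE, hzg⟩
    have hze : z = e i := by
      by_contra hze
      have hz1 : ψ z 0 = 1 := hψ1 z hzmem
      have he1 : ψ (e i) 0 = 1 := hψ1 (e i) (he i)
      have hψz0 : ψ z ≠ 0 := fun h => by rw [h] at hz1; simpa using hz1.symm
      have hNpair : (del M {g}).Indep {z, e i} := by
        apply (hψrep _ ?_).2
        · apply (li_pair_iff hze ψ).2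
          apply (LinearIndependent.pair_iff' hψz0).2
          intro cc hcc
          have h00 := congrFun hcc 0
          simp only [Pi.smul_apply, hz1, he1, smul_eq_mul, mul_one] at h00
          rw [h00, one_smul] at hcc
          exact hze (hψinj hzmem (he i) hcc)
        · rw [hNE]
          rw [Set.insert_subset_iff]
          exact ⟨⟨hzE, hzg⟩, Set.singleton_subset_iff.2 (he i)⟩
      have hMpair : M.Indep {z, e i} := (Matroid.restrict_indep_iff.1 (hdel ▸ hNpair)).1
      have hFpair : LinearIndependent F ![φ z, φ (e i)] :=
        (li_pair_iff hze φ).1 ((hrep _ hMpair.subset_ground).1 hMpair)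
      have hzero := (LinearIndependent.pair_iff.1 hFpair) 1 (-c)
        (by rw [hxz]; module)
      exact one_ne_zero hzero.1
    rw [hze]; exact Set.mem_insert _ _
  · exact M.subset_closure _ hsub2


end Paper
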